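/- Let d, g, z be integers with d ≥ 1, z ∈ {3,4,5}, satisfying g = (z + 5d - 25)/2 (an integer) and 3z² - 2z(3(2d² - 25d + 77) + 2(2d - 9)) + 3d⁴ - 86d³ + 914d² - 4266d + 7371 = 0. Then (z,d,g) = (3,6,4) or (z,d,g) = (4,5,2); the case z = 5 admits no positive integer solution d. -/
import Mathlib

theorem stmt_11 (d g z : ℤ)
    (hd : 1 ≤ d) (hz : z = 3 ∨ z = 4 ∨ z = 5)
    (hg : 2 * g = z + 5 * d - 25)
    (heq : 3 * z ^ 2 - 2 * z * (3 * (2 * d ^ 2 - 25 * d + 77) + 2 * (2 * d - 9))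
        + 3 * d ^ 4 - 86 * d ^ 3 + 914 * d ^ 2 - 4266 * d + 7371 = 0) :
    ((z = 3 ∧ d = 6 ∧ g = 4) ∨ (z = 4 ∧ d = 5 ∧ g = 2)) ∧ z ≠ 5 := by
  have hub : d ≤ 25 := by
    rcases hz with h | h | h <;> subst h <;>
      nlinarith [sq_nonneg (d^2 - 15*d), sq_nonneg (d^2 - 20*d), sq_nonneg (d - 13),
        sq_nonneg (d^2 - 15*d + 30), sq_nonneg d]
  rcases hz with h | h | h <;> subst h <;>
    interval_cases d <;> omega
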